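/- Let W ∈ ℝ^{n×n} be symmetric positive definite, S ∈ ℝ^{n×τ} with SᵀWS invertible, and J, G ∈ ℝ^{d×n}. Set Π := S(SᵀWS)⁻¹SᵀW and J⁺ := J − (J − G)Π. Then: (i) J⁺S = GS, and for every J' ∈ ℝ^{d×n} with J'S = GS one has ‖J⁺ − J‖²_{W⁻¹} ≤ ‖J' − J‖²_{W⁻¹} (so J⁺ solves the sketch-and-project problem min ‖J' − J‖²_{W⁻¹} subject to J'S = GS); and (ii) J⁺ = J + YSᵀW with Y := (G − J)S(SᵀWS)⁻¹, and for every Y' ∈ ℝ^{d×τ} one has ‖J⁺ − G‖²_{W⁻¹} ≤ ‖J + Y'SᵀW − G‖²_{W⁻¹} (so J⁺ also solves the constrain-and-approximate problem). -/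

import Mathlib

open Matrix

/-- Weighted Frobenius norm squared: ‖X‖²_{W⁻¹} = Tr(X W⁻¹ Xᵀ). -/
noncomputable def wnorm2 {d n : ℕ} (W : Matrix (Fin n) (Fin n) ℝ)
    (X : Matrix (Fin d) (Fin n) ℝ) : ℝ :=
  Matrix.trace (X * W⁻¹ * Xᵀ)

lemma trace_nonneg_of_posSemidef {n : ℕ} {A : Matrix (Fin n) (Fin n) ℝ}
    (hA : A.PosSemidef) : 0 ≤ A.trace := by
  rw [Matrix.trace]
  apply Finset.sum_nonneg
  intro i _
  simpa using hA.2 (Finsupp.single i 1)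

lemma wnorm2_nonneg {d n : ℕ} {W : Matrix (Fin n) (Fin n) ℝ} (hW : W.PosDef)
    (X : Matrix (Fin d) (Fin n) ℝ) : 0 ≤ wnorm2 W X := by
  have h : (X * W⁻¹ * Xᴴ).PosSemidef :=
    (hW.posSemidef.inv).mul_mul_conjTranspose_same X
  have hXT : Xᴴ = Xᵀ := rfl
  rw [hXT] at h
  exact trace_nonneg_of_posSemidef h

lemma wnorm2_add {d n : ℕ} {W : Matrix (Fin n) (Fin n) ℝ} (hW : W.PosDef)
    (A B : Matrix (Fin d) (Fin n) ℝ) :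
    wnorm2 W (A + B) = wnorm2 W A + wnorm2 W B +
      2 * Matrix.trace (A * W⁻¹ * Bᵀ) := by
  have hWt : Wᵀ = W := hW.isHermitian
  have hWinv : (W⁻¹)ᵀ = W⁻¹ := by
    rw [Matrix.transpose_nonsing_inv, hWt]
  have hcross : Matrix.trace (B * W⁻¹ * Aᵀ) = Matrix.trace (A * W⁻¹ * Bᵀ) := by
    rw [← Matrix.trace_transpose (B * W⁻¹ * Aᵀ)]
    simp [Matrix.transpose_mul, hWinv, Matrix.mul_assoc]
  unfold wnorm2
  rw [Matrix.transpose_add, Matrix.add_mul, Matrix.add_mul, Matrix.mul_add,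
    Matrix.mul_add, Matrix.trace_add, Matrix.trace_add, Matrix.trace_add, hcross]
  ring

/-- Duality of the sketch-and-project and constrain-and-approximate problems:
`J⁺ := J − (J − G)Π` (with `Π := S(SᵀWS)⁻¹SᵀW`) solves both. -/
theorem sketch_and_project_constrain_and_approximate
    {d n τ : ℕ} (W : Matrix (Fin n) (Fin n) ℝ) (hW : W.PosDef)
    (S : Matrix (Fin n) (Fin τ) ℝ) (hS : IsUnit (Sᵀ * W * S))
    (J G Jp : Matrix (Fin d) (Fin n) ℝ)
    (Pr : Matrix (Fin n) (Fin n) ℝ)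
    (hPr : Pr = S * (Sᵀ * W * S)⁻¹ * Sᵀ * W)
    (hJp : Jp = J - (J - G) * Pr) :
    (Jp * S = G * S ∧
      ∀ J' : Matrix (Fin d) (Fin n) ℝ, J' * S = G * S →
        wnorm2 W (Jp - J) ≤ wnorm2 W (J' - J)) ∧
    (Jp = J + ((G - J) * S * (Sᵀ * W * S)⁻¹) * (Sᵀ * W) ∧
      ∀ Y' : Matrix (Fin d) (Fin τ) ℝ,
        wnorm2 W (Jp - G) ≤ wnorm2 W (J + Y' * (Sᵀ * W) - G)) := by
  set M := (Sᵀ * W * S)⁻¹ with hM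
  have hdet : IsUnit (Sᵀ * W * S).det := (Matrix.isUnit_iff_isUnit_det _).mp hS
  have hMl : M * (Sᵀ * W * S) = 1 := Matrix.nonsing_inv_mul _ hdet
  have hWdet : IsUnit W.det := (Matrix.isUnit_iff_isUnit_det _).mp hW.isUnit
  have hWW : W * W⁻¹ = 1 := Matrix.mul_nonsing_inv _ hWdet
  have hWWl : W⁻¹ * W = 1 := Matrix.nonsing_inv_mul _ hWdet
  have hWt : Wᵀ = W := hW.isHermitian
  -- Π S = S
  have hPS : Pr * S = S := by
    have : Pr * S = S * M * (Sᵀ * W * S) := by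
      rw [hPr]; simp only [Matrix.mul_assoc]
    rw [this, Matrix.mul_assoc, hMl, Matrix.mul_one]
  -- J⁺ S = G S
  have hJpS : Jp * S = G * S := by
    rw [hJp, Matrix.sub_mul, Matrix.mul_assoc, hPS, Matrix.sub_mul, sub_sub_cancel]
  -- (Jp - G) S = 0
  have hJpGS : (Jp - G) * S = 0 := by
    rw [Matrix.sub_mul, hJpS, sub_self]
  -- Jp - J = (G - J) * Pr
  have hJpJ : Jp - J = (G - J) * Pr := by
    rw [hJp]
    have : (G - J) * Pr = -((J - G) * Pr) := by
      rw [← Matrix.neg_mul, neg_sub]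
    rw [this]; abel
  -- (Jp - J) * W⁻¹ = (G - J) * (S * M) * Sᵀ
  have hA : (Jp - J) * W⁻¹ = (G - J) * (S * M) * Sᵀ := by
    rw [hJpJ, hPr]
    simp only [Matrix.mul_assoc, hWW, Matrix.mul_one]
  -- part (ii) closed form
  have hJp2 : Jp = J + ((G - J) * S * M) * (Sᵀ * W) := by
    rw [hJp]
    have h1 : (J - G) * Pr = -(((G - J) * S * M) * (Sᵀ * W)) := by
      have h0 : J - G = -(G - J) := by abel
      rw [hPr, h0]
      simp only [Matrix.neg_mul, Matrix.mul_assoc]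
    rw [h1]; abel
  refine ⟨⟨hJpS, ?_⟩, ⟨hJp2, ?_⟩⟩
  · intro J' hJ'
    have hdecomp : J' - J = (Jp - J) + (J' - Jp) := by abel
    have hBS : (J' - Jp) * S = 0 := by
      rw [Matrix.sub_mul, hJ', hJpS, sub_self]
    have hcross : Matrix.trace ((Jp - J) * W⁻¹ * (J' - Jp)ᵀ) = 0 := by
      rw [hA, Matrix.mul_assoc ((G - J) * (S * M)) Sᵀ]
      have : Sᵀ * (J' - Jp)ᵀ = ((J' - Jp) * S)ᵀ := by
        rw [Matrix.transpose_mul]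
      rw [this, hBS, Matrix.transpose_zero, Matrix.mul_zero, Matrix.trace_zero]
    rw [hdecomp, wnorm2_add hW, hcross]
    simp only [mul_zero, add_zero]
    nlinarith [wnorm2_nonneg hW (J' - Jp)]
  · intro Y'
    set Y := (G - J) * S * M with hY
    have hdecomp : J + Y' * (Sᵀ * W) - G = (Jp - G) + (Y' - Y) * (Sᵀ * W) := by
      rw [Matrix.sub_mul, hJp2]; abel
    have hcross : Matrix.trace ((Jp - G) * W⁻¹ * ((Y' - Y) * (Sᵀ * W))ᵀ) = 0 := by
      have h1 : ((Y' - Y) * (Sᵀ * W))ᵀ = W * (S * (Y' - Y)ᵀ) := by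
        rw [Matrix.transpose_mul, Matrix.transpose_mul, Matrix.transpose_transpose,
          hWt, Matrix.mul_assoc]
      rw [h1, Matrix.mul_assoc (Jp - G) W⁻¹, ← Matrix.mul_assoc W⁻¹ W, hWWl,
        Matrix.one_mul, ← Matrix.mul_assoc, hJpGS, Matrix.zero_mul, Matrix.trace_zero]
    rw [hdecomp, wnorm2_add hW, hcross]
    simp only [mul_zero, add_zero]
    nlinarith [wnorm2_nonneg hW ((Y' - Y) * (Sᵀ * W))]
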